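/- Let R be a commutative ring, let d ≥ 2, and let t₁, …, t_{d+4}, λ₁, …, λ_{d+4} ∈ R. Let A be the (d+1)×(d+4) matrix with entries A_{j,i} = λ_i·t_i^j for 0 ≤ j ≤ d. Then for every 6-element subset {a < b < c < d' < e < f} of [d+4], the following identity of maximal (d+1)×(d+1) minors of A holds, where complements are taken inside [d+4]: m_{{a,b,c}^c}(A)·m_{{a,d',e}^c}(A)·m_{{b,d',f}^c}(A)·m_{{c,e,f}^c}(A) = m_{{a,b,d'}^c}(A)·m_{{a,c,e}^c}(A)·m_{{b,c,f}^c}(A)·m_{{d',e,f}^c}(A). -/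

import Mathlib

/-- The maximal minor `m_{{x,y,z}^c}(A)` of a `(d+1)×(d+4)` matrix `A`: the
determinant of the `(d+1)×(d+1)` submatrix of `A` whose columns are those indexed by
the complement of `{x, y, z}` in `[d+4]`, taken in increasing order. -/
noncomputable def minorCompl {R : Type*} [CommRing R] {d : ℕ}
    (A : Matrix (Fin (d + 1)) (Fin (d + 4)) R) (x y z : Fin (d + 4))
    (hxy : x ≠ y) (hxz : x ≠ z) (hyz : y ≠ z) : R :=
  Matrix.det (Matrix.of fun r j =>
    A r ((({x, y, z} : Finset (Fin (d + 4)))ᶜ).orderEmbOfFin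
      (by
        rw [Finset.card_compl,
          Finset.card_insert_of_notMem (by simp [hxy, hxz]),
          Finset.card_insert_of_notMem (by simp [hyz]),
          Finset.card_singleton, Fintype.card_fin]
        omega) j))

open Finset

section Aux

variable {R : Type*} [CommRing R]

lemma prod_orderEmbOfFin' {α : Type*} [LinearOrder α] {k : ℕ}
    (s : Finset α) (h : s.card = k) (f : α → R) :
    (∏ j : Fin k, f (s.orderEmbOfFin h j)) = ∏ i ∈ s, f i := by
  apply Finset.prod_nbij (fun j => s.orderEmbOfFin h j)
  · intro a _; exact Finset.orderEmbOfFin_mem s h a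
  · intro a _ b _ hab; exact (s.orderEmbOfFin h).injective hab
  · intro x hx
    have hr := Finset.range_orderEmbOfFin s h
    have : x ∈ Set.range (s.orderEmbOfFin h) := by rw [hr]; exact_mod_cast hx
    obtain ⟨j, hj⟩ := this
    exact ⟨j, by simp, hj⟩
  · intro a _; rfl

lemma prod_pairs_emb {α : Type*} [Fintype α] [LinearOrder α] {k : ℕ}
    (s : Finset α) (h : s.card = k) (F : α → α → R) :
    (∏ i : Fin k, ∏ j ∈ Ioi i, F (s.orderEmbOfFin h i) (s.orderEmbOfFin h j)) =
      ∏ q ∈ univ.filter (fun q : α × α => q.1 < q.2 ∧ (q.1 ∈ s ∧ q.2 ∈ s)),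
        F q.1 q.2 := by
  set g := s.orderEmbOfFin h with hg
  rw [Finset.prod_sigma' univ (fun i => Ioi i) (fun i j => F (g i) (g j))]
  apply Finset.prod_nbij (fun x => (g x.1, g x.2))
  · intro a ha
    simp only [Finset.mem_sigma, Finset.mem_Ioi] at ha
    simp only [Finset.mem_filter, Finset.mem_univ, true_and]
    exact ⟨g.strictMono ha.2, Finset.orderEmbOfFin_mem s h _,
      Finset.orderEmbOfFin_mem s h _⟩
  · intro a _ b _ hab
    simp only [Prod.mk.injEq] at hab
    exact Sigma.ext (g.injective hab.1) (heq_of_eq (g.injective hab.2))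
  · intro q hq
    simp only [Finset.coe_filter, Set.mem_setOf_eq, Finset.mem_univ, true_and] at hq
    have hr := Finset.range_orderEmbOfFin s h
    have h1 : q.1 ∈ Set.range g := by rw [hg, hr]; exact_mod_cast hq.2.1
    have h2 : q.2 ∈ Set.range g := by rw [hg, hr]; exact_mod_cast hq.2.2
    obtain ⟨i, hi⟩ := h1
    obtain ⟨j, hj⟩ := h2
    refine ⟨⟨i, j⟩, ?_, ?_⟩
    · simp only [Finset.coe_sigma, Set.mem_sigma_iff, Finset.mem_coe, Finset.mem_Ioi]
      refine ⟨by simp, ?_⟩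
      have : g i < g j := by rw [hi, hj]; exact hq.1
      exact g.strictMono.lt_iff_lt.mp this
    · simp [hi, hj]
  · intro a _; rfl

lemma lam_pointwise {α : Type*} [DecidableEq α] (a b c d e f : α)
    (hab : a ≠ b) (hac : a ≠ c) (had : a ≠ d) (hae : a ≠ e) (haf : a ≠ f)
    (hbc : b ≠ c) (hbd : b ≠ d) (hbe : b ≠ e) (hbf : b ≠ f)
    (hcd : c ≠ d) (hce : c ≠ e) (hcf : c ≠ f)
    (hde : d ≠ e) (hdf : d ≠ f) (hef : e ≠ f) (L : α → R) (i : α) :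
    (if ¬(i = a ∨ i = b ∨ i = c) then L i else 1) *
      (if ¬(i = a ∨ i = d ∨ i = e) then L i else 1) *
      (if ¬(i = b ∨ i = d ∨ i = f) then L i else 1) *
      (if ¬(i = c ∨ i = e ∨ i = f) then L i else 1) =
    (if ¬(i = a ∨ i = b ∨ i = d) then L i else 1) *
      (if ¬(i = a ∨ i = c ∨ i = e) then L i else 1) *
      (if ¬(i = b ∨ i = c ∨ i = f) then L i else 1) *
      (if ¬(i = d ∨ i = e ∨ i = f) then L i else 1) := by
  have h : i = a ∨ i = b ∨ i = c ∨ i = d ∨ i = e ∨ i = f ∨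
      (i ≠ a ∧ i ≠ b ∧ i ≠ c ∧ i ≠ d ∧ i ≠ e ∧ i ≠ f) := by tauto
  rcases h with rfl | rfl | rfl | rfl | rfl | rfl | ⟨h1, h2, h3, h4, h5, h6⟩ <;>
    simp [*,
      hab.symm, hac.symm, had.symm, hae.symm, haf.symm, hbc.symm, hbd.symm, hbe.symm,
      hbf.symm, hcd.symm, hce.symm, hcf.symm, hde.symm, hdf.symm, hef.symm,
      mul_comm, mul_assoc, mul_left_comm]

lemma pair_pointwise {α : Type*} [DecidableEq α] (a b c d e f : α)
    (hab : a ≠ b) (hac : a ≠ c) (had : a ≠ d) (hae : a ≠ e) (haf : a ≠ f)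
    (hbc : b ≠ c) (hbd : b ≠ d) (hbe : b ≠ e) (hbf : b ≠ f)
    (hcd : c ≠ d) (hce : c ≠ e) (hcf : c ≠ f)
    (hde : d ≠ e) (hdf : d ≠ f) (hef : e ≠ f) (X : R) (i j : α) :
    (if ¬(i = a ∨ i = b ∨ i = c) ∧ ¬(j = a ∨ j = b ∨ j = c) then X else 1) *
      (if ¬(i = a ∨ i = d ∨ i = e) ∧ ¬(j = a ∨ j = d ∨ j = e) then X else 1) *
      (if ¬(i = b ∨ i = d ∨ i = f) ∧ ¬(j = b ∨ j = d ∨ j = f) then X else 1) *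
      (if ¬(i = c ∨ i = e ∨ i = f) ∧ ¬(j = c ∨ j = e ∨ j = f) then X else 1) =
    (if ¬(i = a ∨ i = b ∨ i = d) ∧ ¬(j = a ∨ j = b ∨ j = d) then X else 1) *
      (if ¬(i = a ∨ i = c ∨ i = e) ∧ ¬(j = a ∨ j = c ∨ j = e) then X else 1) *
      (if ¬(i = b ∨ i = c ∨ i = f) ∧ ¬(j = b ∨ j = c ∨ j = f) then X else 1) *
      (if ¬(i = d ∨ i = e ∨ i = f) ∧ ¬(j = d ∨ j = e ∨ j = f) then X else 1) := by
  have hi : i = a ∨ i = b ∨ i = c ∨ i = d ∨ i = e ∨ i = f ∨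
      (i ≠ a ∧ i ≠ b ∧ i ≠ c ∧ i ≠ d ∧ i ≠ e ∧ i ≠ f) := by tauto
  have hj : j = a ∨ j = b ∨ j = c ∨ j = d ∨ j = e ∨ j = f ∨
      (j ≠ a ∧ j ≠ b ∧ j ≠ c ∧ j ≠ d ∧ j ≠ e ∧ j ≠ f) := by tauto
  rcases hi with rfl | rfl | rfl | rfl | rfl | rfl | ⟨h1, h2, h3, h4, h5, h6⟩ <;>
    rcases hj with rfl | rfl | rfl | rfl | rfl | rfl | ⟨g1, g2, g3, g4, g5, g6⟩ <;>
    simp [*,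
      hab.symm, hac.symm, had.symm, hae.symm, haf.symm, hbc.symm, hbd.symm, hbe.symm,
      hbf.symm, hcd.symm, hce.symm, hcf.symm, hde.symm, hdf.symm, hef.symm,
      mul_comm, mul_assoc, mul_left_comm]

set_option maxHeartbeats 2000000 in
lemma minorCompl_eq {d : ℕ} (t lam : Fin (d + 4) → R)
    (A : Matrix (Fin (d + 1)) (Fin (d + 4)) R)
    (hA : ∀ (j : Fin (d + 1)) (i : Fin (d + 4)), A j i = lam i * t i ^ (j : ℕ))
    (x y z : Fin (d + 4)) (hxy : x ≠ y) (hxz : x ≠ z) (hyz : y ≠ z) :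
    minorCompl A x y z hxy hxz hyz =
      (∏ i : Fin (d + 4), if ¬(i = x ∨ i = y ∨ i = z) then lam i else 1) *
      ∏ q ∈ univ.filter (fun q : Fin (d + 4) × Fin (d + 4) => q.1 < q.2),
        (if ¬(q.1 = x ∨ q.1 = y ∨ q.1 = z) ∧ ¬(q.2 = x ∨ q.2 = y ∨ q.2 = z)
          then t q.2 - t q.1 else 1) := by
  unfold minorCompl
  set S : Finset (Fin (d + 4)) := {x, y, z} with hS
  have hcard : Sᶜ.card = d + 1 := by
    rw [Finset.card_compl,
      Finset.card_insert_of_notMem (by simp [hxy, hxz]),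
      Finset.card_insert_of_notMem (by simp [hyz]),
      Finset.card_singleton, Fintype.card_fin]
    omega
  set g := Sᶜ.orderEmbOfFin hcard with hg
  have hmat : (Matrix.of fun (r : Fin (d+1)) (j : Fin (d+1)) => A r (g j)) =
      Matrix.of (fun r j => (fun j => lam (g j)) j *
        (Matrix.vandermonde (fun i => t (g i))).transpose r j) := by
    ext r j
    simp [hA, Matrix.vandermonde]
  rw [hmat, Matrix.det_mul_row, Matrix.det_transpose, Matrix.det_vandermonde]
  have hmem : ∀ i : Fin (d + 4), i ∈ Sᶜ ↔ ¬(i = x ∨ i = y ∨ i = z) := by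
    intro i; simp [hS]
  have hlam : (∏ j : Fin (d+1), lam (g j)) =
      ∏ i : Fin (d + 4), if ¬(i = x ∨ i = y ∨ i = z) then lam i else 1 := by
    rw [hg, prod_orderEmbOfFin']
    have : Sᶜ = univ.filter (fun i => ¬(i = x ∨ i = y ∨ i = z)) := by
      ext i; simp [hS]
    rw [this, Finset.prod_filter]
  have hv : (∏ i : Fin (d+1), ∏ j ∈ Ioi i, (t (g j) - t (g i))) =
      ∏ q ∈ univ.filter (fun q : Fin (d + 4) × Fin (d + 4) => q.1 < q.2),
        (if ¬(q.1 = x ∨ q.1 = y ∨ q.1 = z) ∧ ¬(q.2 = x ∨ q.2 = y ∨ q.2 = z)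
          then t q.2 - t q.1 else 1) := by
    rw [hg, prod_pairs_emb Sᶜ hcard (fun a b => t b - t a), ← Finset.prod_filter]
    apply Finset.prod_congr _ (fun _ _ => rfl)
    rw [Finset.filter_filter]
    ext q
    simp only [Finset.mem_filter, Finset.mem_univ, true_and, Finset.mem_compl]
    simp only [hS, Finset.mem_insert, Finset.mem_singleton]
  rw [hlam, hv]

end Aux

/-- Lemma 4.17, made explicit: for a matrix `A` whose columns are scalar multiples
`λᵢ·(1, tᵢ, …, tᵢ^d)` of points of the rational normal curve of degree `d`, and any
six indices `a < b < c < d' < e < f` in `[d+4]` (here `a = p 0, …, f = p 5`), the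
Gale-transformed conic equation holds:
`m_{{a,b,c}^c}·m_{{a,d',e}^c}·m_{{b,d',f}^c}·m_{{c,e,f}^c}
  = m_{{a,b,d'}^c}·m_{{a,c,e}^c}·m_{{b,c,f}^c}·m_{{d',e,f}^c}`. -/
theorem psi_vanishes_on_rationalNormalCurve {R : Type*} [CommRing R] {d : ℕ}
    (hd : 2 ≤ d) (t lam : Fin (d + 4) → R)
    (A : Matrix (Fin (d + 1)) (Fin (d + 4)) R)
    (hA : ∀ (j : Fin (d + 1)) (i : Fin (d + 4)), A j i = lam i * t i ^ (j : ℕ))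
    (p : Fin 6 → Fin (d + 4)) (hp : StrictMono p) :
    minorCompl A (p 0) (p 1) (p 2)
        (hp.injective.ne (by decide)) (hp.injective.ne (by decide))
        (hp.injective.ne (by decide)) *
      minorCompl A (p 0) (p 3) (p 4)
        (hp.injective.ne (by decide)) (hp.injective.ne (by decide))
        (hp.injective.ne (by decide)) *
      minorCompl A (p 1) (p 3) (p 5)
        (hp.injective.ne (by decide)) (hp.injective.ne (by decide))
        (hp.injective.ne (by decide)) *
      minorCompl A (p 2) (p 4) (p 5)
        (hp.injective.ne (by decide)) (hp.injective.ne (by decide))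
        (hp.injective.ne (by decide)) =
    minorCompl A (p 0) (p 1) (p 3)
        (hp.injective.ne (by decide)) (hp.injective.ne (by decide))
        (hp.injective.ne (by decide)) *
      minorCompl A (p 0) (p 2) (p 4)
        (hp.injective.ne (by decide)) (hp.injective.ne (by decide))
        (hp.injective.ne (by decide)) *
      minorCompl A (p 1) (p 2) (p 5)
        (hp.injective.ne (by decide)) (hp.injective.ne (by decide))
        (hp.injective.ne (by decide)) *
      minorCompl A (p 3) (p 4) (p 5)
        (hp.injective.ne (by decide)) (hp.injective.ne (by decide))
        (hp.injective.ne (by decide)) := by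
  have h01 : p 0 ≠ p 1 := hp.injective.ne (by decide)
  have h02 : p 0 ≠ p 2 := hp.injective.ne (by decide)
  have h03 : p 0 ≠ p 3 := hp.injective.ne (by decide)
  have h04 : p 0 ≠ p 4 := hp.injective.ne (by decide)
  have h05 : p 0 ≠ p 5 := hp.injective.ne (by decide)
  have h12 : p 1 ≠ p 2 := hp.injective.ne (by decide)
  have h13 : p 1 ≠ p 3 := hp.injective.ne (by decide)
  have h14 : p 1 ≠ p 4 := hp.injective.ne (by decide)
  have h15 : p 1 ≠ p 5 := hp.injective.ne (by decide)
  have h23 : p 2 ≠ p 3 := hp.injective.ne (by decide)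
  have h24 : p 2 ≠ p 4 := hp.injective.ne (by decide)
  have h25 : p 2 ≠ p 5 := hp.injective.ne (by decide)
  have h34 : p 3 ≠ p 4 := hp.injective.ne (by decide)
  have h35 : p 3 ≠ p 5 := hp.injective.ne (by decide)
  have h45 : p 4 ≠ p 5 := hp.injective.ne (by decide)
  simp only [minorCompl_eq t lam A hA]
  have key : ∀ L1 L2 L3 L4 P1 P2 P3 P4 L1' L2' L3' L4' P1' P2' P3' P4' : R,
      L1 * L2 * L3 * L4 = L1' * L2' * L3' * L4' →
      P1 * P2 * P3 * P4 = P1' * P2' * P3' * P4' →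
      L1 * P1 * (L2 * P2) * (L3 * P3) * (L4 * P4) =
        L1' * P1' * (L2' * P2') * (L3' * P3') * (L4' * P4') := by
    intro L1 L2 L3 L4 P1 P2 P3 P4 L1' L2' L3' L4' P1' P2' P3' P4' hL hP
    have e1 : L1 * P1 * (L2 * P2) * (L3 * P3) * (L4 * P4) =
        L1 * L2 * L3 * L4 * (P1 * P2 * P3 * P4) := by ring
    have e2 : L1' * P1' * (L2' * P2') * (L3' * P3') * (L4' * P4') =
        L1' * L2' * L3' * L4' * (P1' * P2' * P3' * P4') := by ring
    rw [e1, e2, hL, hP]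
  apply key
  · simp only [← Finset.prod_mul_distrib]
    apply Finset.prod_congr rfl
    intro i _
    exact lam_pointwise (p 0) (p 1) (p 2) (p 3) (p 4) (p 5)
      h01 h02 h03 h04 h05 h12 h13 h14 h15 h23 h24 h25 h34 h35 h45 lam i
  · simp only [← Finset.prod_mul_distrib]
    apply Finset.prod_congr rfl
    intro q _
    exact pair_pointwise (p 0) (p 1) (p 2) (p 3) (p 4) (p 5)
      h01 h02 h03 h04 h05 h12 h13 h14 h15 h23 h24 h25 h34 h35 h45 (t q.2 - t q.1) q.1 q.2
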